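/- Fix 0 < δ_L < 1 and δ_R > 0. For every τ_R ≤ -δ_R - 1 there exists a unique τ_L > δ_L + 1 such that φ(τ_L, δ_L, τ_R, δ_R) = 0. Writing this value as G(τ_R), the function G : (-∞, -δ_R - 1] → (δ_L + 1, ∞) is strictly increasing, G(τ_R) → δ_L + 1 as τ_R → -∞, and G(-δ_R - 1) = α + δ_L/α where α = ((1 - δ_L) + √((1 - δ_L)² + 4δ_R²))/(2δ_R) is the largest real solution of -δ_R·α² + (1 - δ_L)·α + δ_R = 0. -/

import Mathlib

noncomputable section

/-- The function `φ` whose zero set bounds `Φ_BYG`. -/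
def phiFn (ξ : ℝ × ℝ × ℝ × ℝ) : ℝ :=
  ξ.2.2.2 - (1 + ξ.2.2.1) * ξ.2.1
    + (1 / 2) * ((1 + ξ.2.2.1) * ξ.1 - ξ.2.2.1 - ξ.2.1 - ξ.2.2.2)
      * (ξ.1 + Real.sqrt (ξ.1 ^ 2 - 4 * ξ.2.1))

namespace CurveGAux

def Dq (dL dR t : ℝ) : ℝ := (t + dL + dR)^2 - 4*(1+t)*dR
def alphaF (dL dR t : ℝ) : ℝ := 2*dR / (t + dL + dR + Real.sqrt (Dq dL dR t))
def GF (dL dR t : ℝ) : ℝ := alphaF dL dR t + dL / alphaF dL dR t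

theorem alpha_spec (dL dR : ℝ) (h0 : 0 < dL) (h1 : dL < 1) (h2 : 0 < dR)
    (t : ℝ) (ht : t ≤ -dR - 1) :
    1 < alphaF dL dR t ∧
      (1+t) * (alphaF dL dR t)^2 - (t + dL + dR) * alphaF dL dR t + dR = 0 := by
  have hD0 : 0 ≤ Dq dL dR t := by unfold Dq; nlinarith
  set s := Real.sqrt (Dq dL dR t) with hs
  have hs2 : s^2 = (t + dL + dR)^2 - 4*(1+t)*dR := by
    rw [hs, Real.sq_sqrt hD0]; rfl
  have hsnn : 0 ≤ s := Real.sqrt_nonneg _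
  have hden : 0 < t + dL + dR + s := by nlinarith [hs2, sq_nonneg (s + (t + dL + dR))]
  have ha : alphaF dL dR t * (t + dL + dR + s) = 2 * dR := by
    unfold alphaF; rw [← hs]; field_simp
  constructor
  · have hlt : s < dR - dL - t := by nlinarith [hs2]
    have : t + dL + dR + s < 2 * dR := by linarith
    unfold alphaF; rw [← hs]
    rw [lt_div_iff₀ hden]; linarith
  · set a := alphaF dL dR t
    have key : ((1+t) * a^2 - (t + dL + dR) * a + dR) * (t + dL + dR + s)^2 = 0 := by
      linear_combination ((1+t) * (a * (t+dL+dR+s)) + (1+t) * (2*dR) - (t+dL+dR) * (t+dL+dR+s)) * ha + dR * hs2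
    have h2 : (t + dL + dR + s)^2 ≠ 0 := pow_ne_zero _ (ne_of_gt hden)
    exact (mul_eq_zero.mp key).resolve_right h2

theorem root_uniq (dL dR : ℝ) (h0 : 0 < dL) (h1 : dL < 1) (h2 : 0 < dR)
    (t : ℝ) (ht : t ≤ -dR - 1) (x : ℝ) (hx1 : 1 < x)
    (hx : (1+t) * x^2 - (t + dL + dR) * x + dR = 0) :
    x = alphaF dL dR t := by
  obtain ⟨ha1, hroot⟩ := alpha_spec dL dR h0 h1 h2 t ht
  set a := alphaF dL dR t
  have hfac : (x - a) * ((1+t)*(x+a) - (t+dL+dR)) = 0 := by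
    linear_combination hx - hroot
  have hq : a * ((1+t)*a - (t+dL+dR)) = -dR := by linear_combination hroot
  have h5 : (1+t)*a - (t+dL+dR) < 0 := by nlinarith
  have hneg : (1+t)*(x+a) - (t+dL+dR) < 0 := by nlinarith
  have := (mul_eq_zero.mp hfac).resolve_right (ne_of_lt hneg)
  linarith

theorem alpha_mono (dL dR : ℝ) (h0 : 0 < dL) (h1 : dL < 1) (h2 : 0 < dR)
    (t t' : ℝ) (htt : t < t') (ht' : t' ≤ -dR - 1) :
    alphaF dL dR t < alphaF dL dR t' := by
  have ht : t ≤ -dR - 1 := le_of_lt (lt_of_lt_of_le htt ht')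
  obtain ⟨ha1, hroot⟩ := alpha_spec dL dR h0 h1 h2 t ht
  obtain ⟨ha1', hroot'⟩ := alpha_spec dL dR h0 h1 h2 t' ht'
  set a := alphaF dL dR t
  set a' := alphaF dL dR t'
  have hpos : (1+t')*a^2 - (t'+dL+dR)*a + dR = (t'-t)*(a^2-a) := by
    linear_combination hroot
  by_contra hcon
  push_neg at hcon
  have hfac : (1+t')*a^2 - (t'+dL+dR)*a + dR = (a - a')*((1+t')*(a+a') - (t'+dL+dR)) := by
    linear_combination hroot'
  have hq : a' * ((1+t')*a' - (t'+dL+dR)) = -dR := by linear_combination hroot'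
  have h5 : (1+t')*a' - (t'+dL+dR) < 0 := by nlinarith
  have hneg : (1+t')*(a+a') - (t'+dL+dR) < 0 := by nlinarith
  have h6 : 0 < (t'-t)*(a^2-a) := mul_pos (by linarith) (by nlinarith)
  have h7 : (a - a')*((1+t')*(a+a') - (t'+dL+dR)) ≤ 0 :=
    mul_nonpos_of_nonneg_of_nonpos (by linarith) (le_of_lt hneg)
  linarith [hpos, hfac, h6, h7]

theorem G_props (dL dR : ℝ) (h0 : 0 < dL) (h1 : dL < 1) (h2 : 0 < dR)
    (t : ℝ) (ht : t ≤ -dR - 1) :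
    dL + 1 < GF dL dR t ∧ phiFn (GF dL dR t, dL, t, dR) = 0 := by
  obtain ⟨ha1, hroot⟩ := alpha_spec dL dR h0 h1 h2 t ht
  set a := alphaF dL dR t with hadef
  have ha0 : 0 < a := by linarith
  have hane : a ≠ 0 := ne_of_gt ha0
  have hGdef : GF dL dR t = a + dL / a := rfl
  have hkey : (a + dL/a)^2 - 4*dL = (a - dL/a)^2 := by field_simp; ring
  have hpos2 : 0 < a - dL/a := by
    have : dL / a < 1 := (div_lt_one ha0).mpr (by linarith)
    linarith
  have hsq : Real.sqrt ((a + dL/a)^2 - 4*dL) = a - dL/a := by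
    rw [hkey, Real.sqrt_sq (le_of_lt hpos2)]
  constructor
  · rw [hGdef]
    have heq : a + dL/a - (dL+1) = (a-1)*(a-dL)/a := by field_simp; ring
    have : 0 < (a-1)*(a-dL)/a :=
      div_pos (mul_pos (by linarith) (by linarith)) ha0
    linarith [heq ▸ this]
  · rw [hGdef]
    simp only [phiFn]
    rw [hsq]
    field_simp
    linear_combination (2*a^2) * hroot

theorem phi_uniq (dL dR : ℝ) (h0 : 0 < dL) (h1 : dL < 1) (h2 : 0 < dR)
    (t : ℝ) (ht : t ≤ -dR - 1) (tL : ℝ) (htL : dL + 1 < tL)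
    (hphi : phiFn (tL, dL, t, dR) = 0) : tL = GF dL dR t := by
  have htL1 : 1 < tL := by linarith
  have hD0 : 0 ≤ tL^2 - 4*dL := by nlinarith
  simp only [phiFn] at hphi
  set sb := Real.sqrt (tL ^ 2 - 4 * dL) with hsb
  have hsb2 : sb^2 = tL^2 - 4*dL := Real.sq_sqrt hD0
  have hsbnn : 0 ≤ sb := Real.sqrt_nonneg _
  set b := (tL + sb)/2 with hb
  have hb1 : 1 < b := by nlinarith [hsb2, hsbnn]
  have hbq : b^2 - tL*b + dL = 0 := by
    rw [hb]; linear_combination (1/4) * hsb2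
  have hb0 : 0 < b := by linarith
  have h2b : tL + sb = 2*b := by rw [hb]; ring
  have hphi' : (1+t)*b^2 - (t+dL+dR)*b + dR = 0 := by
    rw [h2b] at hphi
    linear_combination hphi + (1+t)*hbq
  have hba := root_uniq dL dR h0 h1 h2 t ht b hb1 hphi'
  have hGdef : GF dL dR t = alphaF dL dR t + dL / alphaF dL dR t := rfl
  rw [hGdef, ← hba]
  field_simp
  linear_combination -hbq

theorem alpha_tendsto (dL dR : ℝ) (h0 : 0 < dL) (h1 : dL < 1) (h2 : 0 < dR) :
    Filter.Tendsto (alphaF dL dR) Filter.atBot (nhds 1) := by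
  set A := alphaF dL dR (-dR - 1) with hA
  set K := A^2 + dR with hK
  have hbound : ∀ t : ℝ, t ≤ -dR - 1 →
      1 ≤ alphaF dL dR t ∧ alphaF dL dR t ≤ 1 + K * (-t)⁻¹ := by
    intro t ht
    obtain ⟨ha1, hroot⟩ := alpha_spec dL dR h0 h1 h2 t ht
    set a := alphaF dL dR t
    have haA : a ≤ A := by
      rcases lt_or_eq_of_le ht with h | h
      · exact le_of_lt (alpha_mono dL dR h0 h1 h2 t (-dR-1) h le_rfl)
      · show alphaF dL dR t ≤ alphaF dL dR (-dR - 1)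
        rw [h]
    have hA1 : 1 < A := (alpha_spec dL dR h0 h1 h2 (-dR-1) le_rfl).1
    have htneg : 0 < -t := by linarith
    have hkey : (-t)*(a*(a-1)) = a^2 - (dL+dR)*a + dR := by
      linear_combination -hroot
    have hstep : (-t)*(a-1) ≤ K := by
      have h8 : (-t)*(a-1) ≤ (-t)*(a*(a-1)) := by
        nlinarith [mul_nonneg htneg.le (sq_nonneg (a-1))]
      have h9 : a^2 - (dL+dR)*a + dR ≤ K := by nlinarith
      linarith
    refine ⟨le_of_lt ha1, ?_⟩
    have hdiv : a - 1 ≤ K / (-t) := (le_div_iff₀ htneg).mpr (by linarith [hstep])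
    rw [div_eq_mul_inv] at hdiv
    linarith
  have hup : Filter.Tendsto (fun t : ℝ => 1 + K * (-t)⁻¹) Filter.atBot (nhds 1) := by
    have h1' : Filter.Tendsto (fun t : ℝ => (-t)⁻¹) Filter.atBot (nhds 0) :=
      tendsto_inv_atTop_zero.comp Filter.tendsto_neg_atBot_atTop
    have h2' := (h1'.const_mul K).const_add (1:ℝ)
    simpa using h2'
  apply tendsto_of_tendsto_of_tendsto_of_le_of_le' tendsto_const_nhds hup
  · filter_upwards [Filter.eventually_le_atBot (-dR - 1)] with t ht
    exact (hbound t ht).1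
  · filter_upwards [Filter.eventually_le_atBot (-dR - 1)] with t ht
    exact (hbound t ht).2

end CurveGAux

open CurveGAux in
theorem curve_G (dL dR : ℝ) (h0 : 0 < dL) (h1 : dL < 1) (h2 : 0 < dR) :
    ∃ G : ℝ → ℝ,
      (∀ tR : ℝ, tR ≤ -dR - 1 →
        dL + 1 < G tR ∧ phiFn (G tR, dL, tR, dR) = 0 ∧
          ∀ tL : ℝ, dL + 1 < tL → phiFn (tL, dL, tR, dR) = 0 → tL = G tR) ∧
      (∀ tR tR' : ℝ, tR < tR' → tR' ≤ -dR - 1 → G tR < G tR') ∧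
      Filter.Tendsto G Filter.atBot (nhds (dL + 1)) ∧
      (∃ α : ℝ, α = ((1 - dL) + Real.sqrt ((1 - dL) ^ 2 + 4 * dR ^ 2)) / (2 * dR) ∧
        -dR * α ^ 2 + (1 - dL) * α + dR = 0 ∧
        (∀ a : ℝ, -dR * a ^ 2 + (1 - dL) * a + dR = 0 → a ≤ α) ∧
        G (-dR - 1) = α + dL / α) := by
  refine ⟨GF dL dR, ?_, ?_, ?_, ?_⟩
  · intro tR ht
    obtain ⟨hG1, hG2⟩ := G_props dL dR h0 h1 h2 tR ht
    exact ⟨hG1, hG2, fun tL htL hphi => phi_uniq dL dR h0 h1 h2 tR ht tL htL hphi⟩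
  · intro tR tR' htt ht'
    have ht : tR ≤ -dR - 1 := le_of_lt (lt_of_lt_of_le htt ht')
    have hmono := alpha_mono dL dR h0 h1 h2 tR tR' htt ht'
    have ha1 := (alpha_spec dL dR h0 h1 h2 tR ht).1
    have ha1' := (alpha_spec dL dR h0 h1 h2 tR' ht').1
    set a := alphaF dL dR tR
    set a' := alphaF dL dR tR'
    have ha0 : (0:ℝ) < a := by linarith
    have ha0' : (0:ℝ) < a' := by linarith
    have key : (a' + dL/a') - (a + dL/a) = (a'-a)*(a*a' - dL)/(a*a') := by
      field_simp; ring
    have hpos : 0 < (a'-a)*(a*a' - dL)/(a*a') :=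
      div_pos (mul_pos (by linarith) (by nlinarith)) (mul_pos ha0 ha0')
    show a + dL/a < a' + dL/a'
    linarith [key ▸ hpos]
  · have hα := alpha_tendsto dL dR h0 h1 h2
    have hf : ContinuousAt (fun x : ℝ => x + dL / x) 1 :=
      continuousAt_id.add (continuousAt_const.div continuousAt_id one_ne_zero)
    have := hf.tendsto.comp hα
    have heq : (1:ℝ) + dL / 1 = dL + 1 := by ring
    rw [heq] at this
    exact this
  · set s0 := Real.sqrt ((1 - dL) ^ 2 + 4 * dR ^ 2) with hs0
    have hs0nn : 0 ≤ s0 := Real.sqrt_nonneg _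
    have hs0sq : s0^2 = (1 - dL) ^ 2 + 4 * dR ^ 2 := by
      rw [hs0, Real.sq_sqrt]; positivity
    set α₀ := ((1 - dL) + s0) / (2 * dR) with hα₀
    have hdR2 : (2*dR) ≠ 0 := by positivity
    have hroot₀ : -dR * α₀ ^ 2 + (1 - dL) * α₀ + dR = 0 := by
      rw [hα₀]; field_simp; linear_combination (-1) * hs0sq
    have hα₀1 : 1 < α₀ := by
      rw [hα₀, lt_div_iff₀ (by positivity)]
      nlinarith [hs0sq, hs0nn]
    have hαq : (1+(-dR-1)) * α₀^2 - ((-dR-1) + dL + dR) * α₀ + dR = 0 := by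
      linear_combination hroot₀
    have huniq := root_uniq dL dR h0 h1 h2 (-dR-1) le_rfl α₀ hα₀1 hαq
    refine ⟨α₀, rfl, hroot₀, ?_, ?_⟩
    · intro a ha
      by_contra hcon
      push_neg at hcon
      have hfac : (a - α₀) * (-dR*(a+α₀) + (1-dL)) = 0 := by
        linear_combination ha - hroot₀
      have h2α : 2*dR*α₀ = (1-dL) + s0 := by rw [hα₀]; field_simp
      have hneg : -dR*(a+α₀) + (1-dL) < 0 := by nlinarith [hs0nn]
      have := (mul_eq_zero.mp hfac).resolve_right (ne_of_lt hneg)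
      linarith
    · show GF dL dR (-dR-1) = α₀ + dL / α₀
      unfold GF
      rw [← huniq]

end
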